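/- Let V be a finite-dimensional real vector space and let ω_I, ω_J, ω_K be nondegenerate skew-symmetric bilinear forms on V, regarded as linear isomorphisms ω̂_I, ω̂_J, ω̂_K : V → V* via v ↦ ω(v,·). Assume ω̂_I⁻¹∘ω̂_J = −ω̂_J⁻¹∘ω̂_I, ω̂_J⁻¹∘ω̂_K = −ω̂_K⁻¹∘ω̂_J, and ω̂_K⁻¹∘ω̂_I = −ω̂_I⁻¹∘ω̂_K. Set ĝ := ω̂_I∘ω̂_J⁻¹∘ω̂_K : V → V*. Then the endomorphisms I := ĝ⁻¹∘ω̂_I, J := ĝ⁻¹∘ω̂_J, K := ĝ⁻¹∘ω̂_K of V satisfy the quaternionic relations I² = J² = K² = I∘J∘K = −id_V. -/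

import Mathlib

/-- Let `V` be a finite-dimensional real vector space and `ωI, ωJ, ωK` nondegenerate
skew-symmetric bilinear forms on `V`, regarded as bijective linear maps `V → V*`,
satisfying `ωI⁻¹ ∘ ωJ = -ωJ⁻¹ ∘ ωI`, `ωJ⁻¹ ∘ ωK = -ωK⁻¹ ∘ ωJ` and
`ωK⁻¹ ∘ ωI = -ωI⁻¹ ∘ ωK`.  Set `ĝ := ωI ∘ ωJ⁻¹ ∘ ωK : V ≃ V*` (a composition of
bijections).  Then the endomorphisms `I := ĝ⁻¹ ∘ ωI`, `J := ĝ⁻¹ ∘ ωJ`, `K := ĝ⁻¹ ∘ ωK`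
of `V` satisfy the quaternionic relations `I² = J² = K² = I∘J∘K = -id`. -/
theorem stmt_1 {V : Type} [AddCommGroup V] [Module ℝ V] [FiniteDimensional ℝ V]
    (ωI ωJ ωK : V →ₗ[ℝ] Module.Dual ℝ V)
    (hskewI : ∀ v w : V, ωI v w = -(ωI w v))
    (hskewJ : ∀ v w : V, ωJ v w = -(ωJ w v))
    (hskewK : ∀ v w : V, ωK v w = -(ωK w v))
    (hbI : Function.Bijective ωI) (hbJ : Function.Bijective ωJ)
    (hbK : Function.Bijective ωK)
    (hIJ : (LinearEquiv.ofBijective ωI hbI).symm.toLinearMap ∘ₗ ωJ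
        = -((LinearEquiv.ofBijective ωJ hbJ).symm.toLinearMap ∘ₗ ωI))
    (hJK : (LinearEquiv.ofBijective ωJ hbJ).symm.toLinearMap ∘ₗ ωK
        = -((LinearEquiv.ofBijective ωK hbK).symm.toLinearMap ∘ₗ ωJ))
    (hKI : (LinearEquiv.ofBijective ωK hbK).symm.toLinearMap ∘ₗ ωI
        = -((LinearEquiv.ofBijective ωI hbI).symm.toLinearMap ∘ₗ ωK)) :
    let gHat : V ≃ₗ[ℝ] Module.Dual ℝ V :=
      (LinearEquiv.ofBijective ωK hbK).trans
        (((LinearEquiv.ofBijective ωJ hbJ).symm).trans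
          (LinearEquiv.ofBijective ωI hbI))
    let I : V →ₗ[ℝ] V := gHat.symm.toLinearMap ∘ₗ ωI
    let J : V →ₗ[ℝ] V := gHat.symm.toLinearMap ∘ₗ ωJ
    let K : V →ₗ[ℝ] V := gHat.symm.toLinearMap ∘ₗ ωK
    I ∘ₗ I = -LinearMap.id ∧ J ∘ₗ J = -LinearMap.id ∧ K ∘ₗ K = -LinearMap.id ∧
      I ∘ₗ (J ∘ₗ K) = -LinearMap.id := by
  intro gHat I J K
  set eI := LinearEquiv.ofBijective ωI hbI with heI
  set eJ := LinearEquiv.ofBijective ωJ hbJ with heJ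
  set eK := LinearEquiv.ofBijective ωK hbK with heK
  have h1 : ∀ v, eI.symm (ωJ v) = -(eJ.symm (ωI v)) := fun v => by
    simpa using LinearMap.congr_fun hIJ v
  have h2 : ∀ v, eJ.symm (ωK v) = -(eK.symm (ωJ v)) := fun v => by
    simpa using LinearMap.congr_fun hJK v
  have h3 : ∀ v, eK.symm (ωI v) = -(eI.symm (ωK v)) := fun v => by
    simpa using LinearMap.congr_fun hKI v
  have h1' : ∀ v, eJ.symm (ωI v) = -(eI.symm (ωJ v)) := fun v => by
    rw [h1 v, neg_neg]
  have h2' : ∀ v, eK.symm (ωJ v) = -(eJ.symm (ωK v)) := fun v => by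
    rw [h2 v, neg_neg]
  have h3' : ∀ v, eI.symm (ωK v) = -(eK.symm (ωI v)) := fun v => by
    rw [h3 v, neg_neg]
  -- derived identities
  have d2 : ∀ v, ωJ (eK.symm (ωJ v)) = -(ωK v) := fun v => by
    have h := congrArg eJ (h2' v)
    rw [map_neg, eJ.apply_symm_apply] at h
    exact h
  have d3 : ∀ v, ωI (eK.symm (ωI v)) = -(ωK v) := fun v => by
    have h := congrArg eI (h3 v)
    rw [map_neg, eI.apply_symm_apply] at h
    exact h
  have d1 : ∀ v, ωI (eJ.symm (ωI v)) = -(ωJ v) := fun v => by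
    have h := congrArg eI (h1' v)
    rw [map_neg, eI.apply_symm_apply] at h
    exact h
  -- closed forms for I, J, K
  have hgs : ∀ y, gHat.symm y = eK.symm (eJ (eI.symm y)) := fun y => by
    simp only [gHat, LinearEquiv.symm_trans_apply, LinearEquiv.symm_symm]
    rfl
  have hI : ∀ v, I v = eK.symm (ωJ v) := fun v => by
    show gHat.symm (ωI v) = _
    rw [hgs, show eI.symm (ωI v) = v from eI.symm_apply_apply v]
    exact rfl
  have hJ : ∀ v, J v = -(eK.symm (ωI v)) := fun v => by
    show gHat.symm (ωJ v) = _
    rw [hgs, h1 v, map_neg, eJ.apply_symm_apply, map_neg]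
  have hK : ∀ v, K v = eJ.symm (ωI v) := fun v => by
    show gHat.symm (ωK v) = _
    rw [hgs, h3' v, map_neg, map_neg,
      show eK.symm (eJ (eK.symm (ωI v))) = -(eJ.symm (ωK (eK.symm (ωI v)))) from h2' _,
      neg_neg, show ωK (eK.symm (ωI v)) = ωI v from eK.apply_symm_apply _]
  refine ⟨?_, ?_, ?_, ?_⟩
  · ext v
    simp only [LinearMap.comp_apply, LinearMap.neg_apply, LinearMap.id_apply]
    rw [hI, hI, d2, map_neg, show eK.symm (ωK v) = v from eK.symm_apply_apply v]
  · ext v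
    simp only [LinearMap.comp_apply, LinearMap.neg_apply, LinearMap.id_apply]
    rw [hJ, hJ, map_neg, map_neg, neg_neg, d3, map_neg,
      show eK.symm (ωK v) = v from eK.symm_apply_apply v]
  · ext v
    simp only [LinearMap.comp_apply, LinearMap.neg_apply, LinearMap.id_apply]
    rw [hK, hK, d1, map_neg, show eJ.symm (ωJ v) = v from eJ.symm_apply_apply v]
  · ext v
    simp only [LinearMap.comp_apply, LinearMap.neg_apply, LinearMap.id_apply]
    rw [hK, hJ, d1,
      show eK.symm (-(ωJ v)) = -(eK.symm (ωJ v)) from map_neg _ _, neg_neg, hI, d2,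
      show eK.symm (-(ωK v)) = -(eK.symm (ωK v)) from map_neg _ _,
      show eK.symm (ωK v) = v from eK.symm_apply_apply v]
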